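/- Let q = p^k with k ≥ 1, and consider the Iwasawa algebra Z_p[[X]]. Suppose r is an element of a free pro-p group F on generators including x_1 and y, such that r ≡ [x_1,_m y]·[x_1,_{m−1} y]^{a_{m-1}}⋯[x_1,y]^{a_1}·y^{a_0} modulo [N,N] corresponds to a Weierstrass polynomial ℘(X) = X^m + a_{m−1}X^{m−1} + ⋯ + a_0 annihilating y in N^{ab}. If f: F → Z_p(1) is a crossed homomorphism (relative to θ with θ(x_1) = 1 + q, θ(y) = 1) with f(y) = 1 and f(x_1) = 0, then f(r) = ℘(q). In particular, if r ∈ [N,N] (so f(r) = 0) then ℘(q) = 0, i.e., (X − q) divides ℘(X). -/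

import Mathlib

open scoped commutatorElement

/-- Let `q = p^k` (`k ≥ 1`), `θ` an orientation of a group `F` with
`θ x₁ = 1 + q`, `θ y = 1`, and let `f : F → ℤ_p(1)` be a crossed homomorphism with
`f y = 1`, `f x₁ = 0`.  Let `c i = [x₁,_i y]` be the iterated commutators and
`r = [x₁,_m y]·[x₁,_{m-1} y]^{a_{m-1}} ⋯ [x₁,y]^{a_1}·y^{a_0}` the relation
corresponding to the Weierstrass polynomial `℘(X) = X^m + a_{m-1}X^{m-1} + ⋯ + a_0`
(all `a_i ∈ pℤ_p`).  Then `f r = ℘(q)`; in particular if `f r = 0` then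
`℘(q) = 0`, i.e. `(X − q) ∣ ℘(X)`. -/
theorem stmt_13 (p : ℕ) [Fact p.Prime] (k : ℕ) (hk : 1 ≤ k)
    {F : Type*} [Group F] (θ : F →* ℤ_[p]ˣ) (x₁ y : F)
    (q : ℤ_[p]) (hq : q = (p : ℤ_[p]) ^ k)
    (hθx : ((θ x₁ : ℤ_[p])) = 1 + q) (hθy : θ y = 1)
    (f : F → ℤ_[p])
    (hf : ∀ g h : F, f (g * h) = f g + (θ g : ℤ_[p]) * f h)
    (hfy : f y = 1) (hfx : f x₁ = 0)
    (m : ℕ) (a : ℕ → ℤ) (ha : ∀ i, (p : ℤ) ∣ a i)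
    (c : ℕ → F) (hc0 : c 0 = y) (hcs : ∀ i, c (i + 1) = ⁅x₁, c i⁆)
    (r : F)
    (hr : r = c m * (((List.range m).reverse.map fun i => c i ^ a i).prod)) :
    f r = q ^ m + ∑ i ∈ Finset.range m, (a i : ℤ_[p]) * q ^ i ∧
      (f r = 0 →
        (Polynomial.X - Polynomial.C q) ∣
          (Polynomial.X ^ m +
            ∑ i ∈ Finset.range m, Polynomial.C ((a i : ℤ_[p])) * Polynomial.X ^ i)) := by
  -- basic facts
  have hf1 : f 1 = 0 := by
    have h := hf 1 1
    simp at h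
    exact h
  have hfinv : ∀ g : F, (θ g : ℤ_[p]) * f g⁻¹ = - f g := by
    intro g
    have h := hf g g⁻¹
    simp [hf1] at h
    linear_combination -h
  -- θ is 1 on all commutators c i
  have hθc : ∀ i, θ (c i) = 1 := by
    intro i
    induction i with
    | zero => simpa [hc0] using hθy
    | succ n ih =>
        rw [hcs n, commutatorElement_def]
        simp [mul_comm]
  -- f (c i) = q ^ i
  have hfx' : f x₁⁻¹ = 0 := by
    have h := hfinv x₁
    rw [hfx, neg_zero] at h
    exact (Units.mul_right_eq_zero (θ x₁)).mp h
  have hfc : ∀ i, f (c i) = q ^ i := by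
    intro i
    induction i with
    | zero => simp [hc0, hfy]
    | succ n ih =>
        have hbinv : f (c n)⁻¹ = - q ^ n := by
          have h := hfinv (c n)
          rw [hθc n, ih] at h
          simpa using h
        have hu : (θ x₁ : ℤ_[p]) * (((θ x₁)⁻¹ : ℤ_[p]ˣ) : ℤ_[p]) = 1 := by
          rw [← Units.val_mul, mul_inv_cancel, Units.val_one]
        rw [hcs n, commutatorElement_def]
        simp only [hf, map_mul, map_inv, hθc, hfx, hfx', hbinv, ih,
          Units.val_mul, Units.val_one, mul_one, one_mul, mul_zero, zero_mul,
          zero_add, add_zero]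
        rw [hθx] at hu ⊢
        linear_combination (-(q ^ n)) * hu
  -- additivity on θ-trivial elements
  have hadd : ∀ g h : F, θ g = 1 → f (g * h) = f g + f h := by
    intro g h hg
    rw [hf, hg]
    simp
  have hθpow : ∀ (g : F) (n : ℤ), θ g = 1 → θ (g ^ n) = 1 := by
    intro g n hg
    rw [map_zpow, hg, one_zpow]
  have hfpow : ∀ (g : F) (n : ℤ), θ g = 1 → f (g ^ n) = n * f g := by
    intro g n hg
    have hginv : f g⁻¹ = - f g := by
      have h := hfinv g
      rw [hg] at h
      simpa using h
    induction n using Int.induction_on with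
    | zero => simpa using hf1
    | succ n ih =>
        have : g ^ ((n : ℤ) + 1) = g ^ (n : ℤ) * g := by
          rw [zpow_add_one]
        rw [this, hadd _ _ (hθpow g n hg), ih]
        push_cast
        ring
    | pred n ih =>
        have : g ^ (-(n : ℤ) - 1) = g ^ (-(n : ℤ)) * g⁻¹ := by
          rw [zpow_sub_one]
        rw [this, hadd _ _ (hθpow g (-n) hg), ih, hginv]
        push_cast
        ring
  -- the list product
  have key : ∀ M : ℕ,
      f (((List.range M).reverse.map fun i => c i ^ a i).prod)
        = ∑ i ∈ Finset.range M, (a i : ℤ_[p]) * q ^ i ∧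
      θ (((List.range M).reverse.map fun i => c i ^ a i).prod) = 1 := by
    intro M
    induction M with
    | zero => simp [hf1]
    | succ n ih =>
        have hrange : (List.range (n + 1)).reverse = n :: (List.range n).reverse := by
          rw [List.range_succ, List.reverse_append]
          simp
        obtain ⟨ih1, ih2⟩ := ih
        constructor
        · rw [hrange, List.map_cons, List.prod_cons,
            hadd _ _ (hθpow _ _ (hθc n)), hfpow _ _ (hθc n), hfc n, ih1,
            Finset.sum_range_succ]
          ring
        · rw [hrange, List.map_cons, List.prod_cons, map_mul,
            hθpow _ _ (hθc n), ih2, one_mul]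
  obtain ⟨key1, _⟩ := key m
  have hfr : f r = q ^ m + ∑ i ∈ Finset.range m, (a i : ℤ_[p]) * q ^ i := by
    rw [hr, hadd _ _ (hθc m), hfc m, key1]
  refine ⟨hfr, fun h0 => ?_⟩
  rw [Polynomial.dvd_iff_isRoot]
  have : (q : ℤ_[p]) ^ m + ∑ i ∈ Finset.range m, (a i : ℤ_[p]) * q ^ i = 0 := by
    rw [← hfr]; exact h0
  simpa [Polynomial.IsRoot, Polynomial.eval_finset_sum] using this
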